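/- With θ := Σₐ ηₐ(ξ)θₐ, ξ⊥ := Σₐ ηₐ(ξ)ξₐ, η⊥ := Σₐ ηₐ(ξ)ηₐ, one has θ² - (φξ⊥)⊗(η⊥∘φ) = ‖ξ⊥‖² I, i.e. θ²X - η⊥(φX)·φξ⊥ = ‖ξ⊥‖² X for all X. -/

import Mathlib

open RealInnerProductSpace

/-- Pointwise setup on a real inner product space: an almost contact metric
structure `(φ, ξ, η)` together with an almost contact metric 3-structure
`(φₐ, ξₐ, ηₐ)`, `a ∈ ZMod 3`, satisfying the quaternionic contact relations and
the compatibility relations coming from `JJₐ = JₐJ`.  Here `η x = ⟪x, ξ⟫` and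
`ηₐ x = ⟪x, ξₐ⟫`. -/
structure ContactSetup (V : Type*) [NormedAddCommGroup V] [InnerProductSpace ℝ V] where
  φ : V →ₗ[ℝ] V
  ξ : V
  φa : ZMod 3 → (V →ₗ[ℝ] V)
  ξa : ZMod 3 → V
  φ_sq : ∀ x, φ (φ x) = -x + ⟪x, ξ⟫ • ξ
  ξ_unit : ⟪ξ, ξ⟫ = 1
  φ_ξ : φ ξ = 0
  φ_metric : ∀ x y, ⟪φ x, φ y⟫ = ⟪x, y⟫ - ⟪x, ξ⟫ * ⟪y, ξ⟫
  φa_sq : ∀ a x, φa a (φa a x) = -x + ⟪x, ξa a⟫ • ξa a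
  ξa_unit : ∀ a, ⟪ξa a, ξa a⟫ = 1
  φa_ξa : ∀ a, φa a (ξa a) = 0
  φa_metric : ∀ a x y, ⟪φa a x, φa a y⟫ = ⟪x, y⟫ - ⟪x, ξa a⟫ * ⟪y, ξa a⟫
  quat₁ : ∀ a x, φa a (φa (a + 1) x) - ⟪x, ξa (a + 1)⟫ • ξa a = φa (a + 2) x
  quat₂ : ∀ a x, φa (a + 2) x = -(φa (a + 1) (φa a x)) + ⟪x, ξa a⟫ • ξa (a + 1)
  quat_ξ₁ : ∀ a, φa a (ξa (a + 1)) = ξa (a + 2)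
  quat_ξ₂ : ∀ a, ξa (a + 2) = -(φa (a + 1) (ξa a))
  inter : ∀ a x, φa a (φ x) - ⟪x, ξ⟫ • ξa a = φ (φa a x) - ⟪x, ξa a⟫ • ξ
  inter_ξ : ∀ a, φ (ξa a) = φa a ξ

/-- The local symmetric tensor `θₐ := φₐφ - ξₐ ⊗ η`. -/
def ContactSetup.θa {V : Type*} [NormedAddCommGroup V] [InnerProductSpace ℝ V]
    (S : ContactSetup V) (a : ZMod 3) (x : V) : V :=
  S.φa a (S.φ x) - ⟪x, S.ξ⟫ • S.ξa a

namespace ContactSetup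

variable {V : Type*} [NormedAddCommGroup V] [InnerProductSpace ℝ V] (S : ContactSetup V)

/-- `ξ⊥ := Σₐ ηₐ(ξ) ξₐ`. -/
def ξperp : V := ∑ a : ZMod 3, ⟪S.ξ, S.ξa a⟫ • S.ξa a

/-- `η⊥ := Σₐ ηₐ(ξ) ηₐ`. -/
def ηperp (x : V) : ℝ := ∑ a : ZMod 3, ⟪S.ξ, S.ξa a⟫ * ⟪x, S.ξa a⟫

/-- `θ := Σₐ ηₐ(ξ) θₐ`. -/
def θ (x : V) : V := ∑ a : ZMod 3, ⟪S.ξ, S.ξa a⟫ • S.θa a x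

/-- `φ⊥ := Σₐ ηₐ(ξ) φₐ`. -/
def φperp (x : V) : V := ∑ a : ZMod 3, ⟪S.ξ, S.ξa a⟫ • S.φa a x

/-- `‖ξ⊥‖² = Σₐ ηₐ(ξ)²`. -/
def nsq : ℝ := ∑ a : ZMod 3, ⟪S.ξ, S.ξa a⟫ ^ 2

lemma eta_phia (a : ZMod 3) (x : V) : ⟪S.φa a x, S.ξa a⟫ = 0 := by
  have h1 : S.φa a (S.φa a (S.φa a x)) = -(S.φa a x) + ⟪S.φa a x, S.ξa a⟫ • S.ξa a :=
    S.φa_sq a _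
  have h2 : S.φa a (S.φa a (S.φa a x)) = -(S.φa a x) := by
    rw [show S.φa a (S.φa a (S.φa a x)) = S.φa a (S.φa a (S.φa a x)) from rfl]
    conv_lhs => rw [show S.φa a (S.φa a x) = -x + ⟪x, S.ξa a⟫ • S.ξa a from S.φa_sq a x]
    simp [map_add, map_smul, map_neg, S.φa_ξa]
  have h3 : ⟪S.φa a x, S.ξa a⟫ • S.ξa a = 0 := by
    have := h1.symm.trans h2
    linear_combination (norm := module) this
  have := congrArg (fun v => ⟪v, S.ξa a⟫) h3
  simpa only [real_inner_smul_left, S.ξa_unit, inner_zero_left, mul_one] using this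

lemma skew_a (a : ZMod 3) (x y : V) : ⟪S.φa a x, y⟫ = -⟪x, S.φa a y⟫ := by
  have h := S.φa_metric a x (S.φa a y)
  rw [S.φa_sq a y, eta_phia, mul_zero, sub_zero] at h
  rw [inner_add_right, inner_neg_right, real_inner_smul_right, eta_phia, mul_zero,
    add_zero] at h
  linarith

lemma eta_phi (x : V) : ⟪S.φ x, S.ξ⟫ = 0 := by
  have h1 : S.φ (S.φ (S.φ x)) = -(S.φ x) + ⟪S.φ x, S.ξ⟫ • S.ξ := S.φ_sq _
  have h2 : S.φ (S.φ (S.φ x)) = -(S.φ x) := by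
    conv_lhs => rw [show S.φ (S.φ x) = -x + ⟪x, S.ξ⟫ • S.ξ from S.φ_sq x]
    simp [map_add, map_smul, map_neg, S.φ_ξ]
  have h3 : ⟪S.φ x, S.ξ⟫ • S.ξ = 0 := by
    have := h1.symm.trans h2
    linear_combination (norm := module) this
  have := congrArg (fun v => ⟪v, S.ξ⟫) h3
  simpa only [real_inner_smul_left, S.ξ_unit, inner_zero_left, mul_one] using this

lemma phi_phia_phi (a : ZMod 3) (x : V) :
    S.φ (S.φa a (S.φ x)) =
      -(S.φa a x) + ⟪x, S.ξ⟫ • S.φa a S.ξ + ⟪S.φ x, S.ξa a⟫ • S.ξ := by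
  have h := S.inter a (S.φ x)
  rw [S.eta_phi x, zero_smul, sub_zero] at h
  rw [show S.φ (S.φ x) = -x + ⟪x, S.ξ⟫ • S.ξ from S.φ_sq x] at h
  rw [map_add, map_neg, map_smul] at h
  linear_combination (norm := module) -h

lemma eta_phia_phi (a : ZMod 3) (x : V) :
    ⟪S.φa a (S.φ x), S.ξ⟫ = -⟪x, S.ξa a⟫ + ⟪x, S.ξ⟫ * ⟪S.ξ, S.ξa a⟫ := by
  rw [skew_a, ← S.inter_ξ a, S.φ_metric x (S.ξa a), real_inner_comm (S.ξa a) S.ξ]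
  ring

lemma theta_comp (a b : ZMod 3) (x : V) :
    S.θa b (S.θa a x) =
      ⟪x, S.ξa a⟫ • S.ξa b + ⟪S.φ x, S.ξa a⟫ • S.φa b S.ξ - S.φa b (S.φa a x) := by
  simp only [ContactSetup.θa]
  rw [map_sub, map_smul, S.inter_ξ a, map_sub, map_smul,
    inner_sub_left, real_inner_smul_left,
    phi_phia_phi, eta_phia_phi, real_inner_comm (S.ξa a) S.ξ]
  rw [map_add, map_add, map_neg, map_smul, map_smul]
  match_scalars <;> ring

lemma θa_add (a : ZMod 3) (x y : V) : S.θa a (x + y) = S.θa a x + S.θa a y := by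
  simp only [ContactSetup.θa, map_add, inner_add_left, add_smul]
  module

lemma θa_smul (a : ZMod 3) (r : ℝ) (x : V) : S.θa a (r • x) = r • S.θa a x := by
  simp only [ContactSetup.θa, map_smul, real_inner_smul_left]
  module


end ContactSetup


/-- `θ² - (φξ⊥) ⊗ (η⊥ ∘ φ) = ‖ξ⊥‖² I`: for all `X`,
`θ(θ X) - η⊥(φ X) • φ ξ⊥ = ‖ξ⊥‖² • X`. -/
lemma zmod3_sum {M : Type*} [AddCommMonoid M] (f : ZMod 3 → M) :
    ∑ a : ZMod 3, f a = f 0 + f 1 + f 2 := Fin.sum_univ_three f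

theorem theta_global_sq {V : Type*} [NormedAddCommGroup V] [InnerProductSpace ℝ V]
    (S : ContactSetup V)
    (horth : ∀ a b : ZMod 3, a ≠ b → ⟪S.ξa a, S.ξa b⟫ = 0) (x : V) :
    S.θ (S.θ x) - S.ηperp (S.φ x) • S.φ S.ξperp = S.nsq • x := by
  have n01 : ((0 : ZMod 3) + 1) = 1 := by decide
  have n02 : ((0 : ZMod 3) + 2) = 2 := by decide
  have n11 : ((1 : ZMod 3) + 1) = 2 := by decide
  have n12 : ((1 : ZMod 3) + 2) = 0 := by decide
  have n21 : ((2 : ZMod 3) + 1) = 0 := by decide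
  have n22 : ((2 : ZMod 3) + 2) = 1 := by decide
  have q10 := S.quat₁ 0 x; rw [n01, n02] at q10
  have q11 := S.quat₁ 1 x; rw [n11, n12] at q11
  have q12 := S.quat₁ 2 x; rw [n21, n22] at q12
  have q20 := S.quat₂ 0 x; rw [n01, n02] at q20
  have q21 := S.quat₂ 1 x; rw [n11, n12] at q21
  have q22 := S.quat₂ 2 x; rw [n21, n22] at q22
  have s0 := S.φa_sq 0 x
  have s1 := S.φa_sq 1 x
  have s2 := S.φa_sq 2 x
  simp only [ContactSetup.θ, ContactSetup.ηperp, ContactSetup.ξperp, ContactSetup.nsq,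
    zmod3_sum]
  simp only [S.θa_add, S.θa_smul, S.theta_comp, map_add, map_smul, S.inter_ξ]
  linear_combination (norm := module)
    (-(⟪S.ξ, S.ξa 0⟫ * ⟪S.ξ, S.ξa 1⟫)) • q10 + (-(⟪S.ξ, S.ξa 1⟫ * ⟪S.ξ, S.ξa 2⟫)) • q11 +
    (-(⟪S.ξ, S.ξa 2⟫ * ⟪S.ξ, S.ξa 0⟫)) • q12 + (-(⟪S.ξ, S.ξa 1⟫ * ⟪S.ξ, S.ξa 0⟫)) • q20 +
    (-(⟪S.ξ, S.ξa 2⟫ * ⟪S.ξ, S.ξa 1⟫)) • q21 + (-(⟪S.ξ, S.ξa 0⟫ * ⟪S.ξ, S.ξa 2⟫)) • q22 +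
    (-(⟪S.ξ, S.ξa 0⟫ ^ 2)) • s0 + (-(⟪S.ξ, S.ξa 1⟫ ^ 2)) • s1 + (-(⟪S.ξ, S.ξa 2⟫ ^ 2)) • s2
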